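/- For every integer h ≥ 1 and every prime p, with L = L(h,p): there exist strings u, v, x, y ∈ {0,1}* such that u ≢_L v, u·x ≡_L v, v·x ≡_L v, and v·y ≡_L u. (That is, the minimal DFA of L(h,p) contains the construction forbidden by MM-1QFA.) -/

import Mathlib

noncomputable section

/-- The `n`-dimensional complex Hilbert space `ℂⁿ`. -/
abbrev QState (n : ℕ) := EuclideanSpace ℂ (Fin n)

/-- Apply a matrix to a vector of `ℂⁿ`. -/
def mApply {n : ℕ} (M : Matrix (Fin n) (Fin n) ℂ) (v : QState n) : QState n :=
  Matrix.toEuclideanLin M v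

/-- Myhill–Nerode equivalence: `x ≡_L y` iff `∀ z, xz ∈ L ↔ yz ∈ L`. -/
def mnEquiv {α : Type} (L : Set (List α)) (x y : List α) : Prop :=
  ∀ z : List α, x ++ z ∈ L ↔ y ++ z ∈ L

/-- Myhill–Nerode equivalence as a setoid. -/
def mnSetoid {α : Type} (L : Set (List α)) : Setoid (List α) where
  r := mnEquiv L
  iseqv := ⟨fun _ _ => Iff.rfl, fun h z => (h z).symm, fun h1 h2 z => (h1 z).trans (h2 z)⟩

/-- The blocks `1^a 0^b 1 0^h` with `a ≥ 0`, `b ≥ 1`; `true` = 1, `false` = 0. -/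
def blockLang (h : ℕ) : Set (List Bool) :=
  {w | ∃ a b : ℕ, 1 ≤ b ∧
    w = List.replicate a true ++ List.replicate b false ++ [true] ++ List.replicate h false}

/-- Kleene star of a set of strings. -/
def kleeneStar (P : Set (List Bool)) : Set (List Bool) :=
  {x | ∃ l : List (List Bool), (∀ w ∈ l, w ∈ P) ∧ x = l.flatten}

/-- `L(h,p) = (1*00*10^h)* ∩ {w : |w| ≡ 0 (mod p)}`. -/
def Lhp (h p : ℕ) : Set (List Bool) :=
  {w | w ∈ kleeneStar (blockLang h) ∧ w.length % p = 0}

-- splitting a replicate-prefix equation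
lemma rep_split {α : Type*} {x y : α} (hxy : y ≠ x) :
    ∀ (m b : ℕ) (s z : List α),
      List.replicate b x ++ y :: s = List.replicate m x ++ z →
      ∃ d, b = m + d ∧ z = List.replicate d x ++ y :: s := by
  intro m
  induction m with
  | zero =>
    intro b s z hq
    exact ⟨b, by omega, by simpa using hq.symm⟩
  | succ m ih =>
    intro b s z hq
    cases b with
    | zero => simp [List.replicate_succ] at hq; exact absurd hq.1 hxy
    | succ b =>
      simp only [List.replicate_succ, List.cons_append, List.cons.injEq] at hq
      obtain ⟨d, hd, hz⟩ := ih b s z hq.2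
      exact ⟨d, by omega, hz⟩

lemma rep_both {α : Type*} {x y : α} (hxy : y ≠ x) {m b : ℕ} {s t : List α}
    (hq : List.replicate b x ++ y :: s = List.replicate m x ++ y :: t) :
    b = m ∧ s = t := by
  obtain ⟨d, hd, hz⟩ := rep_split hxy m b s (y :: t) hq
  cases d with
  | zero => simp at hz; exact ⟨by omega, hz.symm⟩
  | succ d => simp [List.replicate_succ] at hz; exact absurd hz.1 hxy

/-- If a block followed by `fl` equals a string that starts with exactly `j` ones
then a zero, the block's leading 1-run has length `j`. -/
lemma head_block {h : ℕ} {a b j : ℕ} (hb : 1 ≤ b) {r fl : List Bool}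
    (heq : (List.replicate a true ++ List.replicate b false ++ [true] ++ List.replicate h false)
             ++ fl = List.replicate j true ++ false :: r) :
    ∃ b0, b = b0 + 1 ∧ a = j ∧
      r = List.replicate b0 false ++ true :: (List.replicate h false ++ fl) := by
  obtain ⟨b0, rfl⟩ : ∃ b0, b = b0 + 1 := ⟨b - 1, by omega⟩
  have heq' : List.replicate a true ++
      false :: (List.replicate b0 false ++ true :: (List.replicate h false ++ fl)) =
      List.replicate j true ++ false :: r := by
    simpa [List.replicate_succ, List.append_assoc] using heq
  obtain ⟨d, hd, hz⟩ := rep_split (by simp : (false : Bool) ≠ true) j a _ _ heq'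
  cases d with
  | zero => simp at hz; exact ⟨b0, rfl, by omega, hz⟩
  | succ d => simp [List.replicate_succ] at hz

lemma block_mem (h a b : ℕ) (hb : 1 ≤ b) :
    List.replicate a true ++ List.replicate b false ++ [true] ++ List.replicate h false
      ∈ blockLang h := ⟨a, b, hb, rfl⟩

/-- S1: the number of zeros after a leading single 1 is irrelevant (if ≥ 1). -/
lemma star_zeros (h : ℕ) {m m' : ℕ} (hm : 1 ≤ m) (hm' : 1 ≤ m') (z : List Bool)
    (hx : true :: (List.replicate m false ++ z) ∈ kleeneStar (blockLang h)) :
    true :: (List.replicate m' false ++ z) ∈ kleeneStar (blockLang h) := by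
  obtain ⟨l, hl, hflat⟩ := hx
  match l with
  | [] => simp at hflat
  | w :: l' =>
    obtain ⟨a, b, hb, rfl⟩ := hl w List.mem_cons_self
    obtain ⟨m0, rfl⟩ : ∃ m0, m = m0 + 1 := ⟨m - 1, by omega⟩
    have heq : (List.replicate a true ++ List.replicate b false ++ [true]
        ++ List.replicate h false) ++ l'.flatten
        = List.replicate 1 true ++ false :: (List.replicate m0 false ++ z) := by
      simpa [List.replicate_succ] using hflat.symm
    obtain ⟨b0, rfl, rfl, hr⟩ := head_block hb heq
    obtain ⟨d, hd, hz⟩ := rep_split (by simp : (true : Bool) ≠ false) m0 b0 _ _ hr.symm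
    refine ⟨(List.replicate 1 true ++ List.replicate (m' + d) false ++ [true]
        ++ List.replicate h false) :: l', ?_, ?_⟩
    · intro w hw
      rcases List.mem_cons.mp hw with rfl | hw
      · exact block_mem h 1 (m' + d) (by omega)
      · exact hl _ (List.mem_cons_of_mem _ hw)
    · rw [List.flatten_cons, hz]
      simp only [List.replicate_add, List.replicate_succ, List.replicate_one, List.replicate_zero,
        List.append_assoc, List.cons_append, List.nil_append]

/-- S2: the number of leading 1s is irrelevant (if ≥ 1). -/
lemma star_ones (h : ℕ) {j j' : ℕ} (hj : 1 ≤ j) (hj' : 1 ≤ j') (z : List Bool)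
    (hx : List.replicate j true ++ z ∈ kleeneStar (blockLang h)) :
    List.replicate j' true ++ z ∈ kleeneStar (blockLang h) := by
  obtain ⟨l, hl, hflat⟩ := hx
  match l with
  | [] =>
    obtain ⟨j0, rfl⟩ : ∃ j0, j = j0 + 1 := ⟨j - 1, by omega⟩
    simp [List.replicate_succ] at hflat
  | w :: l' =>
    obtain ⟨a, b, hb, rfl⟩ := hl w List.mem_cons_self
    obtain ⟨b0, rfl⟩ : ∃ b0, b = b0 + 1 := ⟨b - 1, by omega⟩
    have heq : List.replicate a true ++
        false :: (List.replicate b0 false ++ true :: (List.replicate h false ++ l'.flatten)) =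
        List.replicate j true ++ z := by
      simpa [List.replicate_succ, List.append_assoc] using hflat.symm
    obtain ⟨d, hd, hz⟩ := rep_split (by simp : (false : Bool) ≠ true) j a _ _ heq
    refine ⟨(List.replicate (j' + d) true ++ List.replicate (b0 + 1) false ++ [true]
        ++ List.replicate h false) :: l', ?_, ?_⟩
    · intro w hw
      rcases List.mem_cons.mp hw with rfl | hw
      · exact block_mem h (j' + d) (b0 + 1) (by omega)
      · exact hl _ (List.mem_cons_of_mem _ hw)
    · rw [List.flatten_cons, hz]
      simp only [List.replicate_add, List.replicate_succ, List.replicate_one, List.replicate_zero,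
        List.append_assoc, List.cons_append, List.nil_append]

/-- S3: stripping a full first block, when the rest starts with a 1. -/
lemma star_strip (h q : ℕ) (hq : 1 ≤ q) (r : List Bool) :
    ([true] ++ List.replicate q false ++ [true] ++ List.replicate h false) ++ (true :: r)
        ∈ kleeneStar (blockLang h)
      ↔ (true :: r) ∈ kleeneStar (blockLang h) := by
  constructor
  · rintro ⟨l, hl, hflat⟩
    match l with
    | [] => simp at hflat
    | w :: l' =>
      obtain ⟨a, b, hb, rfl⟩ := hl w List.mem_cons_self
      obtain ⟨q0, rfl⟩ : ∃ q0, q = q0 + 1 := ⟨q - 1, by omega⟩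
      have heq : (List.replicate a true ++ List.replicate b false ++ [true]
          ++ List.replicate h false) ++ l'.flatten
          = List.replicate 1 true ++
            false :: (List.replicate q0 false ++ true :: (List.replicate h false ++ true :: r)) := by
        simpa [List.replicate_succ, List.append_assoc] using hflat.symm
      obtain ⟨b0, rfl, rfl, hr⟩ := head_block hb heq
      have h2 := rep_both (by simp : (true : Bool) ≠ false) hr.symm
      have hfl : l'.flatten = true :: r := by
        have := h2.2
        exact List.append_cancel_left this
      exact ⟨l', fun w hw => hl _ (List.mem_cons_of_mem _ hw), hfl.symm⟩
  · rintro ⟨l, hl, hflat⟩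
    refine ⟨(List.replicate 1 true ++ List.replicate q false ++ [true]
        ++ List.replicate h false) :: l, ?_, ?_⟩
    · intro w hw
      rcases List.mem_cons.mp hw with rfl | hw
      · exact block_mem h 1 q hq
      · exact hl _ hw
    · simp [hflat, List.append_assoc]

/-- S4: the string `1 1 0^h 1 1 0^c 1 0^h` is not in the star. -/
lemma not_star (h c : ℕ) (hh : 1 ≤ h) :
    [true, true] ++ List.replicate h false ++ [true, true] ++ List.replicate c false
        ++ [true] ++ List.replicate h false ∉ kleeneStar (blockLang h) := by
  obtain ⟨h0, rfl⟩ : ∃ h0, h = h0 + 1 := ⟨h - 1, by omega⟩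
  rintro ⟨l, hl, hflat⟩
  match l with
  | [] => simp at hflat
  | w :: l' =>
    obtain ⟨a, b, hb, rfl⟩ := hl w List.mem_cons_self
    have heq : (List.replicate a true ++ List.replicate b false ++ [true]
        ++ List.replicate (h0 + 1) false) ++ l'.flatten
        = List.replicate 2 true ++
          false :: (List.replicate h0 false ++
            true :: (true :: (List.replicate c false ++
              true :: List.replicate (h0 + 1) false))) := by
      simpa [List.replicate_succ, List.append_assoc] using hflat.symm
    obtain ⟨b0, rfl, rfl, hr⟩ := head_block hb heq
    have h2 := rep_both (by simp : (true : Bool) ≠ false) hr.symm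
    have := h2.2
    simp [List.replicate_succ] at this

lemma len_congr (p q : ℕ) {s t : List Bool} (hst : s.length = t.length + p * q)
    (z : List Bool) : (s ++ z).length % p = (t ++ z).length % p := by
  rw [List.length_append, List.length_append, hst,
    show t.length + p * q + z.length = t.length + z.length + p * q by omega,
    Nat.add_mul_mod_self_left]

lemma equiv_of (h p : ℕ) {s t : List Bool} (q : ℕ) (hst : s.length = t.length + p * q)
    (hstar : ∀ z, s ++ z ∈ kleeneStar (blockLang h) ↔ t ++ z ∈ kleeneStar (blockLang h)) :
    mnEquiv (Lhp h p) s t := by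
  intro z
  simp only [Lhp, Set.mem_setOf_eq]
  exact and_congr (hstar z) (by rw [len_congr p q hst z])


/-- For `h ≥ 1` and `p` prime, with `L = L(h,p)`, the minimal DFA of `L`
contains the construction forbidden by MM-1QFA: there are strings `u, v, x, y` with
`u ≢_L v`, `ux ≡_L v`, `vx ≡_L v`, and `vy ≡_L u`. -/
theorem stmt_12 (h p : ℕ) (hh : 1 ≤ h) (hp : p.Prime) :
    ∃ u v x y : List Bool,
      ¬ mnEquiv (Lhp h p) u v ∧
      mnEquiv (Lhp h p) (u ++ x) v ∧
      mnEquiv (Lhp h p) (v ++ x) v ∧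
      mnEquiv (Lhp h p) (v ++ y) u := by
  have hp2 : 2 ≤ p := hp.two_le
  obtain ⟨k0, hk⟩ : ∃ k0, (k0 + 1) + (h + 1) = p * (h + 2) := by
    have h2 : 2 * (h + 2) ≤ p * (h + 2) := Nat.mul_le_mul_right _ hp2
    exact ⟨p * (h + 2) - (h + 2), by omega⟩
  obtain ⟨c, hc⟩ : ∃ c, (c + 1) + (2 * h + 5) = p * (2 * h + 6) := by
    have h2 : 2 * (2 * h + 6) ≤ p * (2 * h + 6) := Nat.mul_le_mul_right _ hp2
    exact ⟨p * (2 * h + 6) - (2 * h + 6), by omega⟩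
  refine ⟨[true], [true] ++ List.replicate p false, List.replicate p false,
    [true] ++ List.replicate h false ++ List.replicate (k0 + 1) true, ?_, ?_, ?_, ?_⟩
  · -- u ≢ v
    intro H
    have hz := H ([true] ++ List.replicate h false ++ [true, true]
      ++ List.replicate (c + 1) false ++ [true] ++ List.replicate h false)
    -- v side is in L
    have hvmem : ([true] ++ List.replicate p false) ++ ([true] ++ List.replicate h false
        ++ [true, true] ++ List.replicate (c + 1) false ++ [true] ++ List.replicate h false)
        ∈ Lhp h p := by
      constructor
      · refine ⟨[List.replicate 1 true ++ List.replicate p false ++ [true]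
            ++ List.replicate h false,
          List.replicate 2 true ++ List.replicate (c + 1) false ++ [true]
            ++ List.replicate h false], ?_, ?_⟩
        · intro w hw
          rcases List.mem_cons.mp hw with rfl | hw
          · exact block_mem h 1 p (by omega)
          rcases List.mem_cons.mp hw with rfl | hw
          · exact block_mem h 2 (c + 1) (by omega)
          · simp at hw
        · simp [List.replicate_succ, List.append_assoc]
      · have hlen : (([true] ++ List.replicate p false) ++ ([true] ++ List.replicate h false
            ++ [true, true] ++ List.replicate (c + 1) false ++ [true]
            ++ List.replicate h false)).length = p * (2 * h + 7) := by
          have : p * (2 * h + 7) = p * (2 * h + 6) + p := by ring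
          simp [List.length_append]
          omega
        rw [hlen, Nat.mul_mod_right]
    have humem := (hz.mpr hvmem).1
    have heqstr : [true] ++ ([true] ++ List.replicate h false ++ [true, true]
        ++ List.replicate (c + 1) false ++ [true] ++ List.replicate h false)
        = [true, true] ++ List.replicate h false ++ [true, true] ++ List.replicate (c + 1) false
          ++ [true] ++ List.replicate h false := by
      simp [List.append_assoc]
    rw [heqstr] at humem
    exact not_star h (c + 1) hh humem
  · -- ux ≡ v
    intro z; rfl
  · -- vx ≡ v
    refine equiv_of h p 1 (by simp [List.length_append]; omega) (fun z => ?_)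
    have e1 : ([true] ++ List.replicate p false ++ List.replicate p false) ++ z
        = true :: (List.replicate (p + p) false ++ z) := by
      rw [List.replicate_add]; simp [List.append_assoc]
    have e2 : ([true] ++ List.replicate p false) ++ z
        = true :: (List.replicate p false ++ z) := by
      simp [List.append_assoc]
    rw [e1, e2]
    exact ⟨star_zeros h (by omega) (by omega) z, star_zeros h (by omega) (by omega) z⟩
  · -- vy ≡ u
    have hmul : p * (h + 3) = p * (h + 2) + p := by ring
    refine equiv_of h p (h + 3) (by simp [List.length_append]; omega) (fun z => ?_)
    have e1 : ([true] ++ List.replicate p false ++ ([true] ++ List.replicate h false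
        ++ List.replicate (k0 + 1) true)) ++ z
        = ([true] ++ List.replicate p false ++ [true] ++ List.replicate h false)
          ++ (true :: (List.replicate k0 true ++ z)) := by
      simp [List.replicate_succ, List.append_assoc]
    have e2 : (true : Bool) :: (List.replicate k0 true ++ z)
        = List.replicate (k0 + 1) true ++ z := by
      simp [List.replicate_succ]
    have e3 : [true] ++ z = List.replicate 1 true ++ z := by simp
    rw [show ([true] ++ List.replicate p false ++ ([true] ++ List.replicate h false
        ++ List.replicate (k0 + 1) true)) ++ z = ([true] ++ List.replicate p false
        ++ [true] ++ List.replicate h false ++ List.replicate (k0 + 1) true) ++ z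
      by simp [List.append_assoc]] at *
    constructor
    · intro hs
      have hs1 : (true : Bool) :: (List.replicate k0 true ++ z) ∈ kleeneStar (blockLang h) := by
        refine (star_strip h p (by omega) _).mp ?_
        have : ([true] ++ List.replicate p false ++ [true] ++ List.replicate h false
            ++ List.replicate (k0 + 1) true) ++ z
            = ([true] ++ List.replicate p false ++ [true] ++ List.replicate h false)
              ++ (true :: (List.replicate k0 true ++ z)) := by
          simp [List.replicate_succ, List.append_assoc]
        rwa [this] at hs
      rw [e2] at hs1
      rw [e3]
      exact star_ones h (by omega) (by omega) z hs1
    · intro hs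
      rw [e3] at hs
      have hs1 := star_ones h (j' := k0 + 1) (by omega) (by omega) z hs
      have : ([true] ++ List.replicate p false ++ [true] ++ List.replicate h false
          ++ List.replicate (k0 + 1) true) ++ z
          = ([true] ++ List.replicate p false ++ [true] ++ List.replicate h false)
            ++ (true :: (List.replicate k0 true ++ z)) := by
        simp [List.replicate_succ, List.append_assoc]
      rw [this]
      refine (star_strip h p (by omega) _).mpr ?_
      rw [e2]
      exact hs1

end
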